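/- Let T be a triangulated category with two t-structures whose aisles satisfy D₁ ⊆ D₀, with colocalization functors c₀, c₁ and localization functors l₀, l₁. Then there is a natural isomorphism l₁(c₀X) ≅ c₀(l₁X) for every object X; more precisely, the unique map φ_X : l₁(c₀X) → c₀(l₁X) making the canonical square involving c₀X → X → l₁X commute is an isomorphism. -/

import Mathlib

open CategoryTheory Limits Pretriangulated

set_option linter.unusedSectionVars false

section Aux

variable {C : Type*} [Category C] [Preadditive C] [HasZeroObject C] [HasShift C ℤ]
  [∀ n : ℤ, (shiftFunctor C n).Additive] [Pretriangulated C]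

/-- Any morphism from a `D₁`-object to `L⟦-1⟧` is zero once we know all
morphisms from `D₁`-objects to `L` vanish. -/
lemma aux_shift_neg_vanish (D₁ : C → Prop) (hshift₁ : ∀ Z, D₁ Z → D₁ (Z⟦(1 : ℤ)⟧))
    {L : C} (hL : ∀ Z, D₁ Z → ∀ f : Z ⟶ L, f = 0)
    {Z : C} (hZ : D₁ Z) (g : Z ⟶ L⟦(-1 : ℤ)⟧) : g = 0 := by
  have h1 : g⟦(1 : ℤ)⟧' ≫ (shiftFunctorCompIsoId C (-1 : ℤ) (1 : ℤ) (by omega)).hom.app L = 0 :=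
    hL _ (hshift₁ _ hZ) _
  have h2 : g⟦(1 : ℤ)⟧' = 0 := by
    rw [← cancel_mono ((shiftFunctorCompIsoId C (-1 : ℤ) (1 : ℤ) (by omega)).hom.app L)]
    simpa using h1
  apply (shiftFunctor C (1 : ℤ)).map_injective
  rw [h2, Functor.map_zero]

/-- If all morphisms from `D₁`-objects (a shift-stable class) to `L` vanish, and
`F ⟶ M ⟶ L ⟶ F⟦1⟧` is distinguished, then `(· ≫ i) : (Z ⟶ F) → (Z ⟶ M)` is injective
for `Z ∈ D₁`. -/
lemma aux_mono_i (D₁ : C → Prop) (hshift₁ : ∀ Z, D₁ Z → D₁ (Z⟦(1 : ℤ)⟧))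
    {F M L : C} (i : F ⟶ M) (p : M ⟶ L) (w : L ⟶ F⟦(1 : ℤ)⟧)
    (hT : Triangle.mk i p w ∈ distTriang C)
    (hL : ∀ Z, D₁ Z → ∀ f : Z ⟶ L, f = 0)
    {Z : C} (hZ : D₁ Z) (f : Z ⟶ F) (hf : f ≫ i = 0) : f = 0 := by
  obtain ⟨g, hg⟩ := Triangle.coyoneda_exact₂ _ (inv_rot_of_distTriang _ hT) f hf
  have hg0 : g = 0 := aux_shift_neg_vanish D₁ hshift₁ hL hZ g
  rw [hg, hg0]; exact zero_comp

/-- Key vanishing: if `ε : A ⟶ X` is a `D₀`-colocalization (`A ∈ D₀`,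
`Hom(Y, ε)` bijective for `Y ∈ D₀`), `D₀` is stable under `⟦1⟧` and extensions, and
`A ⟶ X ⟶ Z ⟶ A⟦1⟧` is distinguished, then every map from a `D₀`-object to `Z` vanishes. -/
lemma aux_cone_vanish (D₀ : C → Prop)
    (hshift₀ : ∀ Z, D₀ Z → D₀ (Z⟦(1 : ℤ)⟧))
    (hext₀ : ∀ (T : Triangle C), (T ∈ distTriang C) → D₀ T.obj₁ → D₀ T.obj₃ → D₀ T.obj₂)
    {A X Z : C} (hA : D₀ A) (ε : A ⟶ X)
    (hεuniv : ∀ Y, D₀ Y → Function.Bijective (fun g : Y ⟶ A => g ≫ ε))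
    (p : X ⟶ Z) (d : Z ⟶ A⟦(1 : ℤ)⟧)
    (hT : Triangle.mk ε p d ∈ distTriang C) :
    ∀ Y, D₀ Y → ∀ z : Y ⟶ Z, z = 0 := by
  have hεp : ε ≫ p = 0 := comp_distTriang_mor_zero₁₂ _ hT
  have hdε : d ≫ ε⟦(1 : ℤ)⟧' = 0 := comp_distTriang_mor_zero₃₁ _ hT
  -- Step 1: for `E ∈ D₀`, `(· ≫ d)` is injective on `E ⟶ Z`.
  have inj_d : ∀ E, D₀ E → ∀ z : E ⟶ Z, z ≫ d = 0 → z = 0 := by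
    intro E hE z hz
    obtain ⟨x, hx⟩ := Triangle.coyoneda_exact₃ _ hT z hz
    dsimp only [Triangle.mk] at hx
    obtain ⟨a, ha⟩ := (hεuniv E hE).2 x
    dsimp at ha
    rw [hx, ← ha, Category.assoc, hεp, comp_zero]
  -- Step 2: maps from `Y⟦1⟧` (with `Y ∈ D₀`) to `Z` vanish.
  have shift_vanish : ∀ Y, D₀ Y → ∀ h : Y⟦(1 : ℤ)⟧ ⟶ Z, h = 0 := by
    intro Y hY h
    obtain ⟨g, hg⟩ := (shiftFunctor C (1 : ℤ)).map_surjective (h ≫ d)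
    have hge : (g ≫ ε)⟦(1 : ℤ)⟧' = 0 := by
      rw [Functor.map_comp, hg, Category.assoc, hdε, comp_zero]
    have hge0 : g ≫ ε = 0 := by
      apply (shiftFunctor C (1 : ℤ)).map_injective
      rw [hge, Functor.map_zero]
    have hg0 : g = 0 := (hεuniv Y hY).1 (a₁ := g) (a₂ := 0) (by simpa using hge0)
    apply inj_d _ (hshift₀ _ hY)
    rw [← hg, hg0, Functor.map_zero]
  -- Step 3: general case via an extension.
  intro Y hY z
  obtain ⟨E, e, f, hTE⟩ := distinguished_cocone_triangle₂ (z ≫ d)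
  have hE : D₀ E := hext₀ _ hTE hA hY
  have hfz : f ≫ z = 0 := by
    apply inj_d _ hE
    rw [Category.assoc]
    exact comp_distTriang_mor_zero₂₃ _ hTE
  obtain ⟨(h : A⟦(1 : ℤ)⟧ ⟶ Z), hh⟩ := Triangle.yoneda_exact₃ _ hTE z hfz
  dsimp only [Triangle.mk] at hh
  have hh0 : h = 0 := shift_vanish _ hA h
  rw [hh, hh0, comp_zero]

end Aux

/-- Let `D₁ ⊆ D₀` be aisles of t-structures.  Let `ε : A ⟶ X` be the
`D₀`-colocalization of `X`, `q₁ : A ⟶ LA` the `l₁`-localization of `A` (with fiber in `D₁`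
and `l₁`-local target), `q : X ⟶ LX` the `l₁`-localization of `X`, and `ε' : B ⟶ LX` the
`D₀`-colocalization of `LX`.  Then there is a unique map `φ : LA = l₁(c₀X) ⟶ c₀(l₁X) = B`
making the canonical square involving `c₀X ⟶ X ⟶ l₁X` commute, and any such `φ` is an
isomorphism. -/
theorem stmt7 {C : Type*} [Category C] [Preadditive C] [HasZeroObject C] [HasShift C ℤ]
    [∀ n : ℤ, (shiftFunctor C n).Additive] [Pretriangulated C]
    (D₀ D₁ : C → Prop) (hsub : ∀ Z, D₁ Z → D₀ Z)
    (hshift₀ : ∀ Z, D₀ Z → D₀ (Z⟦(1 : ℤ)⟧))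
    (hshift₁ : ∀ Z, D₁ Z → D₁ (Z⟦(1 : ℤ)⟧))
    (hext₀ : ∀ (T : Triangle C), (T ∈ distTriang C) → D₀ T.obj₁ → D₀ T.obj₃ → D₀ T.obj₂)
    {X A LA LX B : C}
    -- `ε : A ⟶ X` is the `D₀`-colocalization of `X`
    (hA : D₀ A) (ε : A ⟶ X)
    (hεuniv : ∀ Y, D₀ Y → Function.Bijective (fun g : Y ⟶ A => g ≫ ε))
    -- `q₁ : A ⟶ LA` is the `l₁`-localization of `A = c₀X`
    {F₁ : C} (i₁ : F₁ ⟶ A) (q₁ : A ⟶ LA) (w₁ : LA ⟶ F₁⟦(1 : ℤ)⟧)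
    (hT₁ : Triangle.mk i₁ q₁ w₁ ∈ distTriang C) (hF₁ : D₁ F₁)
    (hLA : ∀ Z, D₁ Z → ∀ f : Z ⟶ LA, f = 0)
    -- `q : X ⟶ LX` is the `l₁`-localization of `X`
    {F₂ : C} (i₂ : F₂ ⟶ X) (q : X ⟶ LX) (w₂ : LX ⟶ F₂⟦(1 : ℤ)⟧)
    (hT₂ : Triangle.mk i₂ q w₂ ∈ distTriang C) (hF₂ : D₁ F₂)
    (hLX : ∀ Z, D₁ Z → ∀ f : Z ⟶ LX, f = 0)
    -- `ε' : B ⟶ LX` is the `D₀`-colocalization of `LX = l₁X`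
    (hB : D₀ B) (ε' : B ⟶ LX)
    (hε'univ : ∀ Y, D₀ Y → Function.Bijective (fun g : Y ⟶ B => g ≫ ε')) :
    (∃! φ : LA ⟶ B, q₁ ≫ (φ ≫ ε') = ε ≫ q) ∧
      ∀ φ : LA ⟶ B, q₁ ≫ (φ ≫ ε') = ε ≫ q → IsIso φ := by
  have hiq₁ : i₁ ≫ q₁ = 0 := comp_distTriang_mor_zero₁₂ _ hT₁
  have hw₂i₂ : w₂ ≫ i₂⟦(1 : ℤ)⟧' = 0 := comp_distTriang_mor_zero₃₁ _ hT₂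
  -- `LA ∈ D₀` (extension of `A` by `F₁⟦1⟧`).
  have hLAmem : D₀ LA :=
    hext₀ (Triangle.mk i₁ q₁ w₁).rotate (rot_of_distTriang _ hT₁) hA
      (hsub _ (hshift₁ _ hF₁))
  -- Uniqueness of maps out of `LA` into `LX` through `q₁`.
  have uniq_psi : ∀ ψ ψ' : LA ⟶ LX, q₁ ≫ ψ = q₁ ≫ ψ' → ψ = ψ' := by
    intro ψ ψ' h
    have h0 : q₁ ≫ (ψ - ψ') = 0 := by rw [Preadditive.comp_sub, h, sub_self]
    obtain ⟨g, hg⟩ := Triangle.yoneda_exact₃ _ hT₁ (ψ - ψ') h0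
    have hg0 : g = 0 := hLX _ (hshift₁ _ hF₁) g
    have : ψ - ψ' = 0 := by rw [hg, hg0]; exact comp_zero
    exact sub_eq_zero.mp this
  -- Existence and uniqueness of φ.
  have existsφ : ∃ φ : LA ⟶ B, q₁ ≫ (φ ≫ ε') = ε ≫ q := by
    obtain ⟨ψ₀, hψ₀⟩ := (hε'univ A hA).2 (ε ≫ q)
    dsimp at hψ₀
    have h1 : (i₁ ≫ ψ₀) ≫ ε' = 0 := by
      rw [Category.assoc, hψ₀, ← Category.assoc]
      exact hLX _ hF₁ _
    have h2 : i₁ ≫ ψ₀ = 0 :=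
      (hε'univ F₁ (hsub _ hF₁)).1 (a₁ := i₁ ≫ ψ₀) (a₂ := 0) (by simpa using h1)
    obtain ⟨(φ : LA ⟶ B), hφ⟩ := Triangle.yoneda_exact₂ _ hT₁ ψ₀ h2
    dsimp only [Triangle.mk] at hφ
    exact ⟨φ, by rw [← Category.assoc, ← hφ, hψ₀]⟩
  have uniqφ : ∀ φ φ' : LA ⟶ B, q₁ ≫ (φ ≫ ε') = ε ≫ q → q₁ ≫ (φ' ≫ ε') = ε ≫ q → φ = φ' := by
    intro φ φ' h h'
    have := uniq_psi (φ ≫ ε') (φ' ≫ ε') (by rw [h, h'])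
    exact (hε'univ LA hLAmem).1 this
  refine ⟨⟨existsφ.choose, existsφ.choose_spec, fun φ' h' =>
    uniqφ φ' existsφ.choose h' existsφ.choose_spec⟩, ?_⟩
  -- Now the isomorphism part.
  intro φ hcomm
  set ψ : LA ⟶ LX := φ ≫ ε' with hψdef
  have hcψ : q₁ ≫ ψ = ε ≫ q := hcomm
  -- Construct θ : F₁ ⟶ F₂.
  have hθ0 : (i₁ ≫ ε) ≫ q = 0 := by
    rw [Category.assoc]; exact hLX _ hF₁ _
  obtain ⟨(θ : F₁ ⟶ F₂), hθ⟩ := Triangle.coyoneda_exact₂ _ hT₂ (i₁ ≫ ε) hθ0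
  dsimp only [Triangle.mk] at hθ
  have θ' : F₁ ⟶ F₂ := θ
  -- Third square: ψ ≫ w₂ = w₁ ≫ θ⟦1⟧'.
  have hsq3 : ψ ≫ w₂ = w₁ ≫ θ⟦(1 : ℤ)⟧' := by
    obtain ⟨(ψ' : LA ⟶ LX), hψ'₁, hψ'₂⟩ := complete_distinguished_triangle_morphism _ _ hT₁ hT₂ θ ε hθ
    dsimp only [Triangle.mk] at hψ'₁ hψ'₂
    have : ψ = ψ' := uniq_psi ψ ψ' (by rw [hcψ]; exact hψ'₁.symm)
    rw [this]
    exact hψ'₂.symm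
  -- θ is an isomorphism.
  have mono_i₂ : ∀ {Z : C}, D₁ Z → ∀ f : Z ⟶ F₂, f ≫ i₂ = 0 → f = 0 :=
    fun {Z} hZ f hf => aux_mono_i D₁ hshift₁ i₂ q w₂ hT₂ hLX hZ f hf
  have hθbij : ∀ Z, D₁ Z → Function.Bijective (fun g : Z ⟶ F₁ => g ≫ θ) := by
    intro Z hZ
    constructor
    · intro g g' hgg'
      dsimp at hgg'
      have h1 : (g ≫ i₁) ≫ ε = (g' ≫ i₁) ≫ ε := by
        simp only [Category.assoc, hθ]
        rw [← Category.assoc, ← Category.assoc, hgg']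
      have h2 : g ≫ i₁ = g' ≫ i₁ := (hεuniv Z (hsub _ hZ)).1 h1
      have h3 : (g - g') ≫ i₁ = 0 := by rw [Preadditive.sub_comp, h2, sub_self]
      have := aux_mono_i D₁ hshift₁ i₁ q₁ w₁ hT₁ hLA hZ (g - g') h3
      exact sub_eq_zero.mp this
    · intro h
      obtain ⟨a, ha⟩ := (hεuniv Z (hsub _ hZ)).2 (h ≫ i₂)
      dsimp at ha
      have haq : a ≫ q₁ = 0 := hLA _ hZ _
      obtain ⟨(g : Z ⟶ F₁), hg⟩ := Triangle.coyoneda_exact₂ _ hT₁ a haq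
      dsimp only [Triangle.mk] at hg
      refine ⟨(g : Z ⟶ F₁), ?_⟩
      have h1 : (g ≫ θ) ≫ i₂ = h ≫ i₂ := by
        rw [Category.assoc, ← hθ, ← Category.assoc, ← hg, ha]
      have h2 : (g ≫ θ - h) ≫ i₂ = 0 := by rw [Preadditive.sub_comp, h1, sub_self]
      exact sub_eq_zero.mp (mono_i₂ hZ _ h2)
  have hθiso : IsIso θ := by
    obtain ⟨σ, hσ⟩ := (hθbij F₂ hF₂).2 (𝟙 F₂)
    dsimp at hσ
    refine ⟨σ, ?_, hσ⟩
    apply (hθbij F₁ hF₁).1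
    dsimp
    rw [Category.assoc, hσ, Category.comp_id, Category.id_comp]
  have hθshiftiso : IsIso (θ⟦(1 : ℤ)⟧') := inferInstance
  -- Vanishing from the cone of ε.
  obtain ⟨Z, p, d, hTZ⟩ := distinguished_cocone_triangle ε
  have cone_vanish := aux_cone_vanish D₀ hshift₀ hext₀ hA ε hεuniv p d hTZ
  have eps_shift_mono : ∀ Y, D₀ Y → ∀ v : Y ⟶ A⟦(1 : ℤ)⟧, v ≫ ε⟦(1 : ℤ)⟧' = 0 → v = 0 := by
    intro Y hY v hv
    obtain ⟨(z : Y ⟶ Z), hz⟩ := Triangle.coyoneda_exact₁ _ hTZ v hv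
    dsimp only [Triangle.mk] at hz
    rw [hz, cone_vanish Y hY z, zero_comp]
  -- Bijectivity of (· ≫ ψ) for Y ∈ D₀.
  have hψbij : ∀ Y, D₀ Y → Function.Bijective (fun g : Y ⟶ LA => g ≫ ψ) := by
    intro Y hY
    constructor
    · intro g g' hgg'
      dsimp at hgg'
      have hsub0 : (g - g') ≫ ψ = 0 := by rw [Preadditive.sub_comp, hgg', sub_self]
      set g₀ := g - g' with hg₀def
      have hw : g₀ ≫ w₁ ≫ θ⟦(1 : ℤ)⟧' = 0 := by
        rw [← hsq3, ← Category.assoc, hsub0, zero_comp]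
      have hw0 : g₀ ≫ w₁ = 0 := by
        rw [← cancel_mono (θ⟦(1 : ℤ)⟧'), Category.assoc, zero_comp]
        exact hw
      obtain ⟨(a : Y ⟶ A), ha⟩ := Triangle.coyoneda_exact₃ _ hT₁ g₀ hw0
      dsimp only [Triangle.mk] at ha
      have haq : (a ≫ ε) ≫ q = 0 := by
        rw [Category.assoc, ← hcψ, ← Category.assoc, ← ha, hsub0]
      obtain ⟨(b : Y ⟶ F₂), hb⟩ := Triangle.coyoneda_exact₂ _ hT₂ (a ≫ ε) haq
      dsimp only [Triangle.mk] at hb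
      have hainv : a = (b ≫ inv θ) ≫ i₁ := by
        apply (hεuniv Y hY).1
        dsimp
        rw [hb]
        simp [hθ]
      have : g₀ = 0 := by
        rw [ha, hainv, Category.assoc, Category.assoc, hiq₁]
        simp
      exact sub_eq_zero.mp this
    · intro b
      set u : Y ⟶ F₁⟦(1 : ℤ)⟧ := b ≫ w₂ ≫ inv (θ⟦(1 : ℤ)⟧') with hudef
      have hui : u ≫ i₁⟦(1 : ℤ)⟧' = 0 := by
        apply eps_shift_mono Y hY
        have h5 : u ≫ i₁⟦(1 : ℤ)⟧' ≫ ε⟦(1 : ℤ)⟧' = u ≫ (θ⟦(1 : ℤ)⟧' ≫ i₂⟦(1 : ℤ)⟧') := by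
          rw [← Functor.map_comp, ← Functor.map_comp, hθ]
        rw [Category.assoc, h5, hudef]
        simp only [Category.assoc, IsIso.inv_hom_id_assoc]
        rw [hw₂i₂, comp_zero]
      obtain ⟨(g : Y ⟶ LA), hg⟩ := Triangle.coyoneda_exact₁ _ hT₁ u hui
      change Y ⟶ LA at g
      dsimp only [Triangle.mk] at hg
      have hrest : (b - g ≫ ψ) ≫ w₂ = 0 := by
        rw [Preadditive.sub_comp, Category.assoc, hsq3, ← Category.assoc, ← hg, hudef]
        simp
      obtain ⟨(x : Y ⟶ X), hx⟩ := Triangle.coyoneda_exact₃ _ hT₂ (b - g ≫ ψ) hrest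
      dsimp only [Triangle.mk] at hx
      obtain ⟨a, ha⟩ := (hεuniv Y hY).2 x
      dsimp at ha
      refine ⟨g + a ≫ q₁, ?_⟩
      show (g + a ≫ q₁) ≫ ψ = b
      rw [Preadditive.add_comp, Category.assoc, hcψ, ← Category.assoc a ε q, ha, ← hx]
      abel
  -- Transfer to φ and conclude.
  have hφbij : ∀ Y, D₀ Y → Function.Bijective (fun g : Y ⟶ LA => g ≫ φ) := by
    intro Y hY
    constructor
    · intro g g' hgg'
      dsimp at hgg'
      apply (hψbij Y hY).1
      dsimp
      rw [hψdef, ← Category.assoc, ← Category.assoc, hgg']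
    · intro c
      obtain ⟨g, hg⟩ := (hψbij Y hY).2 (c ≫ ε')
      refine ⟨g, (hε'univ Y hY).1 ?_⟩
      dsimp at hg ⊢
      rw [Category.assoc, ← hψdef, hg]
  obtain ⟨σ, hσ⟩ := (hφbij B hB).2 (𝟙 B)
  dsimp at hσ
  refine ⟨σ, ?_, hσ⟩
  apply (hφbij LA hLAmem).1
  dsimp
  rw [Category.assoc, hσ, Category.comp_id, Category.id_comp]
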